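/- For every natural number n ≥ 0, in the polynomial ring ℤ[x, y] one has the congruence (x+y)^(5·2^(n+1)) − x^(5·2^(n+1)) − y^(5·2^(n+1)) ≡ 2·x^(2^n)·y^(9·2^n) + x^(2·2^n)·y^(8·2^n) + 2·x^(4·2^n)·y^(6·2^n) + 2·x^(6·2^n)·y^(4·2^n) + x^(8·2^n)·y^(2·2^n) + 2·x^(9·2^n)·y^(2^n) modulo 4. -/
import Mathlib


open MvPolynomial

lemma four_eq_zero_poly : (4 : MvPolynomial (Fin 2) (ZMod 4)) = 0 := by
  have : ((4 : ℕ) : MvPolynomial (Fin 2) (ZMod 4)) = 0 := by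
    rw [← map_natCast (C : ZMod 4 →+* MvPolynomial (Fin 2) (ZMod 4)),
      show ((4 : ℕ) : ZMod 4) = 0 from rfl, map_zero]
  simpa using this

lemma key_pow (n : ℕ) :
    (X 0 + X 1 : MvPolynomial (Fin 2) (ZMod 4)) ^ (2 ^ (n + 1))
      = ((X 0) ^ (2 ^ n) + (X 1) ^ (2 ^ n)) ^ 2 := by
  induction n with
  | zero => norm_num
  | succ k ih =>
    have h2 : (2 : ℕ) ^ (k + 2) = 2 ^ (k + 1) * 2 := by ring
    have h2' : (2 : ℕ) ^ (k + 1) = 2 ^ k * 2 := by ring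
    rw [h2, pow_mul, ih, h2', pow_mul, pow_mul]
    set u := (X 0 : MvPolynomial (Fin 2) (ZMod 4)) ^ (2 ^ k)
    set v := (X 1 : MvPolynomial (Fin 2) (ZMod 4)) ^ (2 ^ k)
    linear_combination (u ^ 2 * v ^ 2 + u * v ^ 3 + u ^ 3 * v) * four_eq_zero_poly

/-- For every `n : ℕ`, in `ℤ[x, y]` one has
`(x+y)^(5·2^(n+1)) − x^(5·2^(n+1)) − y^(5·2^(n+1)) ≡
  2·x^(2^n)·y^(9·2^n) + x^(2·2^n)·y^(8·2^n) + 2·x^(4·2^n)·y^(6·2^n)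
  + 2·x^(6·2^n)·y^(4·2^n) + x^(8·2^n)·y^(2·2^n) + 2·x^(9·2^n)·y^(2^n)`
modulo `4`. Here `x = X 0`, `y = X 1`. -/
theorem pow_five_two_pow_congruence (n : ℕ) :
    ∀ m : Fin 2 →₀ ℕ, (4 : ℤ) ∣ MvPolynomial.coeff m
      (((X 0 + X 1 : MvPolynomial (Fin 2) ℤ) ^ (5 * 2 ^ (n + 1))
          - (X 0) ^ (5 * 2 ^ (n + 1)) - (X 1) ^ (5 * 2 ^ (n + 1)))
        - (2 * (X 0) ^ (2 ^ n) * (X 1) ^ (9 * 2 ^ n)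
          + (X 0) ^ (2 * 2 ^ n) * (X 1) ^ (8 * 2 ^ n)
          + 2 * (X 0) ^ (4 * 2 ^ n) * (X 1) ^ (6 * 2 ^ n)
          + 2 * (X 0) ^ (6 * 2 ^ n) * (X 1) ^ (4 * 2 ^ n)
          + (X 0) ^ (8 * 2 ^ n) * (X 1) ^ (2 * 2 ^ n)
          + 2 * (X 0) ^ (9 * 2 ^ n) * (X 1) ^ (2 ^ n))) := by
  intro m
  rw [show (4 : ℤ) = ((4 : ℕ) : ℤ) by norm_num, ← ZMod.intCast_zmod_eq_zero_iff_dvd]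
  have hmap : ((X 0 + X 1 : MvPolynomial (Fin 2) (ZMod 4)) ^ (5 * 2 ^ (n + 1))
          - (X 0) ^ (5 * 2 ^ (n + 1)) - (X 1) ^ (5 * 2 ^ (n + 1)))
        - (2 * (X 0) ^ (2 ^ n) * (X 1) ^ (9 * 2 ^ n)
          + (X 0) ^ (2 * 2 ^ n) * (X 1) ^ (8 * 2 ^ n)
          + 2 * (X 0) ^ (4 * 2 ^ n) * (X 1) ^ (6 * 2 ^ n)
          + 2 * (X 0) ^ (6 * 2 ^ n) * (X 1) ^ (4 * 2 ^ n)
          + (X 0) ^ (8 * 2 ^ n) * (X 1) ^ (2 * 2 ^ n)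
          + 2 * (X 0) ^ (9 * 2 ^ n) * (X 1) ^ (2 ^ n)) = 0 := by
    have hx : ∀ (p : MvPolynomial (Fin 2) (ZMod 4)) (k : ℕ),
        p ^ (k * 2 ^ n) = (p ^ (2 ^ n)) ^ k := by
      intro p k; rw [mul_comm, pow_mul]
    have h5 : 5 * 2 ^ (n + 1) = 10 * 2 ^ n := by ring
    have hsum : (X 0 + X 1 : MvPolynomial (Fin 2) (ZMod 4)) ^ (5 * 2 ^ (n + 1))
        = ((X 0) ^ (2 ^ n) + (X 1) ^ (2 ^ n)) ^ 10 := by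
      rw [mul_comm, pow_mul, key_pow, ← pow_mul]
    rw [hsum, h5, hx, hx, hx (X 0) 2, hx (X 0) 4, hx (X 0) 6, hx (X 0) 8, hx (X 0) 9,
      hx (X 1) 9, hx (X 1) 8, hx (X 1) 6, hx (X 1) 4, hx (X 1) 2]
    set u := (X 0 : MvPolynomial (Fin 2) (ZMod 4)) ^ (2 ^ n)
    set v := (X 1 : MvPolynomial (Fin 2) (ZMod 4)) ^ (2 ^ n)
    linear_combination (2 * u * v ^ 9 + 11 * u ^ 2 * v ^ 8 + 30 * u ^ 3 * v ^ 7
      + 52 * u ^ 4 * v ^ 6 + 63 * u ^ 5 * v ^ 5 + 52 * u ^ 6 * v ^ 4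
      + 30 * u ^ 7 * v ^ 3 + 11 * u ^ 8 * v ^ 2 + 2 * u ^ 9 * v) * four_eq_zero_poly
  have hmap0 : MvPolynomial.map (Int.castRingHom (ZMod 4))
      (((X 0 + X 1 : MvPolynomial (Fin 2) ℤ) ^ (5 * 2 ^ (n + 1))
          - (X 0) ^ (5 * 2 ^ (n + 1)) - (X 1) ^ (5 * 2 ^ (n + 1)))
        - (2 * (X 0) ^ (2 ^ n) * (X 1) ^ (9 * 2 ^ n)
          + (X 0) ^ (2 * 2 ^ n) * (X 1) ^ (8 * 2 ^ n)
          + 2 * (X 0) ^ (4 * 2 ^ n) * (X 1) ^ (6 * 2 ^ n)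
          + 2 * (X 0) ^ (6 * 2 ^ n) * (X 1) ^ (4 * 2 ^ n)
          + (X 0) ^ (8 * 2 ^ n) * (X 1) ^ (2 * 2 ^ n)
          + 2 * (X 0) ^ (9 * 2 ^ n) * (X 1) ^ (2 ^ n))) = 0 := by
    simp only [map_sub, map_add, map_mul, map_pow, MvPolynomial.map_X, map_ofNat]
    exact hmap
  have h := congrArg (MvPolynomial.coeff m) hmap0
  rw [MvPolynomial.coeff_map, MvPolynomial.coeff_zero] at h
  exact h
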